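/- Let X be a generic metric space with exactly n ≥ 2 points and set δ = δ(X)/6. If Y and Y' are metric spaces each with at most n points satisfying d_GH(X,Y) < δ and d_GH(X,Y') < δ, then Y and Y' each have exactly n points and d_GH(Y,Y') = ‖ν(Y) − ν(Y')‖_∞. -/

import Mathlib

open scoped Classical

/-- The list of half-distances between unordered pairs of distinct points of a finite
metric space, arranged in ascending order: the vector `ν(X) ∈ ℝ^{n(n-1)/2}_∞`. -/
noncomputable def nuList (X : Type*) [MetricSpace X] [Fintype X] : List ℝ :=
  ((Finset.univ.filter fun p : Sym2 X => ¬ p.IsDiag).val.map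
    (Sym2.lift ⟨fun x y => dist x y / 2, fun x y => by simp [dist_comm]⟩)).sort (· ≤ ·)

/-- The `ℓ^∞` distance `‖ν(X) − ν(Y)‖_∞` between two vectors given as lists
(the maximum of coordinatewise absolute differences). -/
noncomputable def supDist (l₁ l₂ : List ℝ) : ℝ :=
  (List.zipWith (fun a b => |a - b|) l₁ l₂).foldr max 0

/-- The quantity `δ(X)`: for a space with at most two points, the distance between the
two points (i.e. the diameter); otherwise the least of the minimal triangle-inequality
defect and the minimal difference of distances of essentially distinct pairs. -/
noncomputable def deltaX (X : Type*) [MetricSpace X] [Fintype X] : ℝ :=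
  if Fintype.card X ≤ 2 then Metric.diam (Set.univ : Set X)
  else
    min
      (sInf {r : ℝ | ∃ x y z : X, x ≠ y ∧ y ≠ z ∧ x ≠ z ∧ r = dist x y + dist y z - dist x z})
      (sInf {r : ℝ | ∃ x y p q : X, x ≠ y ∧ p ≠ q ∧ 3 ≤ ({x, y, p, q} : Set X).ncard ∧
        r = |dist x y - dist p q|})

/-- A finite metric space is generic if all its nonzero distances are pairwise distinct
and all its triangle inequalities are strict. -/
def IsGenericSpace (X : Type*) [MetricSpace X] : Prop :=
  (∀ x y z w : X, x ≠ y → z ≠ w → dist x y = dist z w → ({x, y} : Set X) = {z, w}) ∧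
  (∀ x y z : X, x ≠ y → y ≠ z → x ≠ z → dist x z < dist x y + dist y z)

/-- A bijection between metric spaces is a structural isomorphism if it preserves the
order on the set of distances. -/
def IsStructuralIsomorphism {X Y : Type*} [MetricSpace X] [MetricSpace Y] (f : X ≃ Y) : Prop :=
  ∀ x y z w : X, dist x y ≤ dist z w ↔ dist (f x) (f y) ≤ dist (f z) (f w)

/-- The distortion of a relation between two metric spaces. -/
noncomputable def relDis {X Y : Type*} [MetricSpace X] [MetricSpace Y]
    (R : Set (X × Y)) : ℝ :=
  sSup {r : ℝ | ∃ p ∈ R, ∃ q ∈ R, r = |dist p.1 q.1 - dist p.2 q.2|}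

namespace LocGH

set_option linter.unusedSectionVars false

/-! ### Elementary list lemmas -/

lemma foldr_max_nonneg (l : List ℝ) : 0 ≤ l.foldr max 0 := by
  induction l with
  | nil => simp
  | cons a t ih => exact le_trans ih (le_max_right _ _)

lemma foldr_max_le {l : List ℝ} {m : ℝ} (hm : 0 ≤ m) (h : ∀ x ∈ l, x ≤ m) :
    l.foldr max 0 ≤ m := by
  induction l with
  | nil => simpa
  | cons a t ih =>
    exact max_le (h a (by simp)) (ih fun x hx => h x (List.mem_cons_of_mem _ hx))

lemma le_foldr_max {l : List ℝ} {x : ℝ} (hx : x ∈ l) : x ≤ l.foldr max 0 := by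
  induction l with
  | nil => simp at hx
  | cons a t ih =>
    rcases List.mem_cons.1 hx with rfl | h
    · exact le_max_left _ _
    · exact le_trans (ih h) (le_max_right _ _)

lemma zipWith_ofFn {n : ℕ} (f : ℝ → ℝ → ℝ) (a b : Fin n → ℝ) :
    List.zipWith f (List.ofFn a) (List.ofFn b) = List.ofFn fun i => f (a i) (b i) := by
  apply List.ext_getElem
  · simp
  · intro i h1 h2
    simp

lemma supDist_nonneg (l₁ l₂ : List ℝ) : 0 ≤ supDist l₁ l₂ := foldr_max_nonneg _

lemma supDist_ofFn_le {n : ℕ} {a b : Fin n → ℝ} {m : ℝ} (hm : 0 ≤ m)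
    (h : ∀ i, |a i - b i| ≤ m) : supDist (List.ofFn a) (List.ofFn b) ≤ m := by
  rw [supDist, zipWith_ofFn]
  refine foldr_max_le hm ?_
  intro x hx
  rcases List.mem_ofFn.1 hx with ⟨i, rfl⟩
  exact h i

lemma le_supDist_ofFn {n : ℕ} (a b : Fin n → ℝ) (i : Fin n) :
    |a i - b i| ≤ supDist (List.ofFn a) (List.ofFn b) := by
  rw [supDist, zipWith_ofFn]
  exact le_foldr_max (List.mem_ofFn.2 ⟨i, rfl⟩)

/-! ### The rearrangement inequality for the sup distance -/

lemma exists_le_index {n : ℕ} (τ : Equiv.Perm (Fin n)) (i : Fin n) :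
    ∃ j, j ≤ i ∧ i ≤ τ j := by
  by_contra hc
  push_neg at hc
  have hsub : (Finset.Iic i).image τ ⊆ Finset.Iio i := by
    intro k hk
    rcases Finset.mem_image.1 hk with ⟨j, hj, rfl⟩
    exact Finset.mem_Iio.2 (hc j (Finset.mem_Iic.1 hj))
  have h1 : (Finset.Iic i).card ≤ (Finset.Iio i).card := by
    rw [← Finset.card_image_of_injective _ τ.injective]
    exact Finset.card_le_card hsub
  rw [Fin.card_Iic, Fin.card_Iio] at h1
  omega

lemma rearrange {n : ℕ} {a b : Fin n → ℝ} (ha : Monotone a) (hb : Monotone b)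
    (σ : Equiv.Perm (Fin n)) {m : ℝ} (h : ∀ i, |a i - b (σ i)| ≤ m) (i : Fin n) :
    |a i - b i| ≤ m := by
  rw [abs_sub_le_iff]
  constructor
  · obtain ⟨j, hj, hij⟩ := exists_le_index σ.symm i
    have h1 : a i ≤ a (σ.symm j) := ha hij
    have h2 : a (σ.symm j) - b j ≤ m := by
      have := h (σ.symm j); rw [Equiv.apply_symm_apply] at this
      exact (abs_sub_le_iff.1 this).1
    have h3 : b j ≤ b i := hb hj
    linarith
  · obtain ⟨j, hj, hij⟩ := exists_le_index σ i
    have h1 : b i ≤ b (σ j) := hb hij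
    have h2 : b (σ j) - a j ≤ m := (abs_sub_le_iff.1 (h j)).2
    have h3 : a j ≤ a i := ha hj
    linarith

/-! ### Pairs and half-distances -/

variable (Y : Type) [MetricSpace Y] [Fintype Y]

noncomputable def hd : Sym2 Y → ℝ :=
  Sym2.lift ⟨fun x y => dist x y / 2, fun x y => by simp [dist_comm]⟩

noncomputable def pairs : Finset (Sym2 Y) := Finset.univ.filter fun p : Sym2 Y => ¬ p.IsDiag

lemma nuList_def : nuList Y = ((pairs Y).val.map (hd Y)).sort (· ≤ ·) := rfl

variable {Y}

@[simp] lemma hd_mk (x y : Y) : hd Y s(x, y) = dist x y / 2 := rfl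

lemma mem_pairs {P : Sym2 Y} : P ∈ pairs Y ↔ ¬ P.IsDiag := by
  simp [pairs]

lemma mk_mem_pairs {x y : Y} : s(x, y) ∈ pairs Y ↔ x ≠ y := by
  rw [mem_pairs, Sym2.mk_isDiag_iff]

/-- Sorted enumeration of the pairs of `Y` by half-distance. -/
lemma exists_enum {N : ℕ} (hN : (pairs Y).card = N)
    (hinj : ∀ P ∈ pairs Y, ∀ Q ∈ pairs Y, hd Y P = hd Y Q → P = Q) :
    ∃ e : Fin N → Sym2 Y,
      (∀ i, e i ∈ pairs Y) ∧ (∀ P ∈ pairs Y, ∃ i, e i = P) ∧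
      Monotone (fun i => hd Y (e i)) ∧
      (Function.Injective fun i => hd Y (e i)) ∧
      nuList Y = List.ofFn fun i => hd Y (e i) := by
  classical
  set V : Finset ℝ := (pairs Y).image (hd Y) with hV
  have hVcard : V.card = N := by
    rw [hV, Finset.card_image_of_injOn (fun P hP Q hQ h => hinj P hP Q hQ h), hN]
  let e0 := V.orderIsoOfFin hVcard
  have hmem : ∀ i : Fin N, ∃ P ∈ pairs Y, hd Y P = (e0 i : ℝ) := by
    intro i
    have := (e0 i).2
    simp only [hV, Finset.mem_image] at this
    obtain ⟨P, hP, hPe⟩ := this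
    exact ⟨P, hP, hPe⟩
  set e : Fin N → Sym2 Y := fun i => (hmem i).choose with he
  have he1 : ∀ i, e i ∈ pairs Y := fun i => (hmem i).choose_spec.1
  have he2 : ∀ i, hd Y (e i) = (e0 i : ℝ) := fun i => (hmem i).choose_spec.2
  have hmono : Monotone fun i => hd Y (e i) := by
    intro i j hij
    show hd Y (e i) ≤ hd Y (e j)
    rw [he2, he2]
    exact e0.le_iff_le.2 hij
  have hdinj : Function.Injective fun i => hd Y (e i) := by
    intro i j hij
    simp only [he2] at hij
    exact e0.injective (Subtype.ext hij)
  refine ⟨e, he1, ?_, hmono, hdinj, ?_⟩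
  · intro P hP
    have hmemV : hd Y P ∈ V := by rw [hV]; exact Finset.mem_image_of_mem _ hP
    refine ⟨e0.symm ⟨hd Y P, hmemV⟩, ?_⟩
    apply hinj _ (he1 _) _ hP
    rw [he2]
    congr 1
    exact congrArg Subtype.val (e0.apply_symm_apply ⟨hd Y P, hmemV⟩)
  · have hofneq : (List.ofFn fun i => hd Y (e i)) = List.ofFn fun i => (e0 i : ℝ) := by
      congr 1; funext i; exact he2 i
    have hVval : V.val = (pairs Y).val.map (hd Y) :=
      Finset.image_val_of_injOn (fun P hP Q hQ h => hinj P hP Q hQ h)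
    have hofn : ((List.ofFn fun i => (e0 i : ℝ)) : Multiset ℝ) = V.val := by
      rw [← Fin.univ_val_map]
      have h2 : (Finset.univ.val.map fun i => e0 i) = (Finset.univ : Finset ↥V).val := by
        rw [← Finset.map_univ_equiv e0.toEquiv, Finset.map_val]; rfl
      calc (Finset.univ.val.map fun i => (e0 i : ℝ))
          = ((Finset.univ.val.map fun i => e0 i).map fun v : ↥V => (v : ℝ)) := by
            rw [Multiset.map_map]; rfl
        _ = V.val := by
            rw [h2, Finset.univ_eq_attach, Finset.attach_val]
            exact (Multiset.attach_map_val' V.val (fun x => x)).trans (Multiset.map_id' V.val)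
    have hsorted : (List.ofFn fun i => hd Y (e i)).Pairwise (· ≤ ·) :=
      List.sortedLE_iff_pairwise.1 (List.sortedLE_ofFn_iff.2 hmono)
    rw [nuList_def]
    refine List.Perm.eq_of_pairwise' (Multiset.pairwise_sort _ _) hsorted ?_
    rw [← Multiset.coe_eq_coe, Multiset.sort_eq, hofneq, hofn, hVval]

variable {Y' : Type} [MetricSpace Y'] [Fintype Y']

lemma map_mem_pairs (u : Y ≃ Y') {P : Sym2 Y} (hP : P ∈ pairs Y) :
    Sym2.map u P ∈ pairs Y' := by
  induction P using Sym2.ind with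
  | _ x y =>
    rw [mk_mem_pairs] at hP
    rw [Sym2.map_pair_eq, mk_mem_pairs]
    exact fun h => hP (u.injective h)

lemma map_map_symm (u : Y ≃ Y') (Q : Sym2 Y') : Sym2.map u (Sym2.map u.symm Q) = Q := by
  induction Q using Sym2.ind with
  | _ x y => simp

lemma card_pairs_eq (u : Y ≃ Y') : (pairs Y).card = (pairs Y').card := by
  refine Finset.card_bij (fun P _ => Sym2.map u P) (fun P hP => map_mem_pairs u hP) ?_ ?_
  · intro P _ Q _ h
    exact Sym2.map.injective u.injective h
  · intro Q hQ
    exact ⟨Sym2.map u.symm Q, map_mem_pairs u.symm hQ, show Sym2.map u (Sym2.map u.symm Q) = Q from map_map_symm u Q⟩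

lemma abs_hd_map_le (u : Y ≃ Y') {m : ℝ}
    (hu : ∀ a b : Y, |dist (u a) (u b) - dist a b| ≤ 2 * m) (P : Sym2 Y) :
    |hd Y' (Sym2.map u P) - hd Y P| ≤ m := by
  induction P using Sym2.ind with
  | _ x y =>
    rw [Sym2.map_pair_eq, hd_mk, hd_mk]
    have := hu x y
    rw [abs_le] at this ⊢
    constructor <;> linarith [this.1, this.2]

/-- Step 2: lower bound — for any bijection moving distances by at most `2m`,
the sup-distance of the sorted vectors is at most `m`. -/
lemma supDist_nuList_le (u : Y ≃ Y') {m : ℝ} (hm : 0 ≤ m)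
    (hinjY : ∀ P ∈ pairs Y, ∀ Q ∈ pairs Y, hd Y P = hd Y Q → P = Q)
    (hinjY' : ∀ P ∈ pairs Y', ∀ Q ∈ pairs Y', hd Y' P = hd Y' Q → P = Q)
    (hu : ∀ a b : Y, |dist (u a) (u b) - dist a b| ≤ 2 * m) :
    supDist (nuList Y) (nuList Y') ≤ m := by
  classical
  obtain ⟨e, he1, he2, hemono, hedinj, heq⟩ := exists_enum rfl hinjY
  have hNY' : (pairs Y').card = (pairs Y).card := (card_pairs_eq u).symm
  obtain ⟨e', he1', he2', hemono', hedinj', heq'⟩ := exists_enum hNY' hinjY'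
  have hex : ∀ i, ∃ j, e' j = Sym2.map u (e i) := fun i => he2' _ (map_mem_pairs u (he1 i))
  set σ0 : Fin (pairs Y).card → Fin (pairs Y).card := fun i => (hex i).choose with hσ
  have hσ0 : ∀ i, e' (σ0 i) = Sym2.map u (e i) := fun i => (hex i).choose_spec
  have hσinj : Function.Injective σ0 := by
    intro i j hij
    have h1 : e' (σ0 i) = e' (σ0 j) := by rw [hij]
    rw [hσ0, hσ0] at h1
    have h2 := Sym2.map.injective u.injective h1
    exact hedinj (congrArg (hd Y) h2)
  have hσbij : Function.Bijective σ0 := (Finite.injective_iff_bijective).1 hσinj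
  set σ : Equiv.Perm (Fin (pairs Y).card) := Equiv.ofBijective σ0 hσbij with hσdef
  have hkey : ∀ i, |hd Y (e i) - hd Y' (e' (σ i))| ≤ m := by
    intro i
    have : e' (σ i) = Sym2.map u (e i) := hσ0 i
    rw [this, abs_sub_comm]
    exact abs_hd_map_le u hu (e i)
  have hall := fun i => rearrange hemono hemono' σ hkey i
  rw [heq, heq']
  exact supDist_ofFn_le hm hall

/-- Step 3: for an order-preserving bijection, every pair's distance change is bounded
by twice the sup-distance of the sorted vectors. -/
lemma abs_sub_le_two_supDist (u : Y ≃ Y')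
    (hinjY : ∀ P ∈ pairs Y, ∀ Q ∈ pairs Y, hd Y P = hd Y Q → P = Q)
    (hinjY' : ∀ P ∈ pairs Y', ∀ Q ∈ pairs Y', hd Y' P = hd Y' Q → P = Q)
    (horder : ∀ P ∈ pairs Y, ∀ Q ∈ pairs Y,
      (hd Y P ≤ hd Y Q ↔ hd Y' (Sym2.map u P) ≤ hd Y' (Sym2.map u Q))) :
    ∀ a b : Y, |dist (u a) (u b) - dist a b| ≤ 2 * supDist (nuList Y) (nuList Y') := by
  intro a b
  by_cases hab : a = b
  · subst hab
    simp only [dist_self, sub_zero, abs_zero]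
    have := supDist_nonneg (nuList Y) (nuList Y')
    linarith
  classical
  obtain ⟨e, he1, he2, hemono, hedinj, heq⟩ := exists_enum rfl hinjY
  have hNY' : (pairs Y').card = (pairs Y).card := (card_pairs_eq u).symm
  obtain ⟨e', he1', he2', hemono', hedinj', heq'⟩ := exists_enum hNY' hinjY'
  have hex : ∀ i, ∃ j, e' j = Sym2.map u (e i) := fun i => he2' _ (map_mem_pairs u (he1 i))
  set σ0 : Fin (pairs Y).card → Fin (pairs Y).card := fun i => (hex i).choose with hσ
  have hσ0 : ∀ i, e' (σ0 i) = Sym2.map u (e i) := fun i => (hex i).choose_spec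
  have hσinj : Function.Injective σ0 := by
    intro i j hij
    have h1 : e' (σ0 i) = e' (σ0 j) := by rw [hij]
    rw [hσ0, hσ0] at h1
    have h2 := Sym2.map.injective u.injective h1
    exact hedinj (congrArg (hd Y) h2)
  have hσbij : Function.Bijective σ0 := (Finite.injective_iff_bijective).1 hσinj
  set σ : Equiv.Perm (Fin (pairs Y).card) := Equiv.ofBijective σ0 hσbij with hσdef
  -- the composite map is monotone, hence matches the sorted order
  have hcmono : Monotone fun i => hd Y' (e' (σ i)) := by
    intro i j hij
    show hd Y' (e' (σ i)) ≤ hd Y' (e' (σ j))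
    have h1 : hd Y (e i) ≤ hd Y (e j) := hemono hij
    have h2 := (horder _ (he1 i) _ (he1 j)).1 h1
    rw [show (σ : Fin _ → Fin _) = σ0 from rfl, hσ0, hσ0]
    exact h2
  have hmatch : ∀ i, hd Y' (e' (σ i)) = hd Y' (e' i) := by
    intro i
    have hz : ∀ j, |hd Y' (e' (σ j)) - hd Y' (e' (σ j))| ≤ (0:ℝ) := by simp
    have := rearrange hcmono hemono' σ (m := 0) (fun j => by simp) i
    have h2 : |hd Y' (e' (σ i)) - hd Y' (e' i)| ≤ 0 := this
    have := abs_nonneg (hd Y' (e' (σ i)) - hd Y' (e' i))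
    have h3 : |hd Y' (e' (σ i)) - hd Y' (e' i)| = 0 := le_antisymm h2 this
    have h4 := abs_eq_zero.1 h3
    linarith
  -- now apply to the pair s(a,b)
  have hPmem : s(a, b) ∈ pairs Y := mk_mem_pairs.2 hab
  obtain ⟨i, hi⟩ := he2 _ hPmem
  have hbound := le_supDist_ofFn (fun i => hd Y (e i)) (fun i => hd Y' (e' i)) i
  rw [← heq, ← heq'] at hbound
  have hci : hd Y' (e' (σ i)) = hd Y' (Sym2.map u (e i)) := by
    rw [show (σ : Fin _ → Fin _) = σ0 from rfl, hσ0]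
  have hval : |hd Y (e i) - hd Y' (Sym2.map u (e i))| ≤ supDist (nuList Y) (nuList Y') := by
    rw [← hmatch i, hci] at hbound
    exact hbound
  rw [hi] at hval
  rw [Sym2.map_pair_eq, hd_mk, hd_mk] at hval
  rw [abs_le] at hval ⊢
  constructor <;> linarith [hval.1, hval.2]


/-! ### Properties of `deltaX` -/

variable {X : Type} [MetricSpace X] [Fintype X]

lemma univ_eq_pair (h2 : Fintype.card X = 2) {x y : X} (hxy : x ≠ y) :
    (Finset.univ : Finset X) = {x, y} := by
  symm
  apply Finset.eq_univ_of_card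
  rw [Finset.card_pair hxy, h2]

lemma deltaX_le_abs_sub (hn : 2 ≤ Fintype.card X)
    {x y p q : X} (hxy : x ≠ y) (hpq : p ≠ q) (hne : s(x, y) ≠ s(p, q)) :
    deltaX X ≤ |dist x y - dist p q| := by
  by_cases hc : Fintype.card X ≤ 2
  · exfalso
    have h2 : Fintype.card X = 2 := le_antisymm hc hn
    have huniv := univ_eq_pair h2 hxy
    have hp : p = x ∨ p = y := by
      have : p ∈ ({x, y} : Finset X) := huniv ▸ Finset.mem_univ p
      simpa using this
    have hq : q = x ∨ q = y := by
      have : q ∈ ({x, y} : Finset X) := huniv ▸ Finset.mem_univ q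
      simpa using this
    rcases hp with rfl | rfl
    · rcases hq with rfl | rfl
      · exact hpq rfl
      · exact hne rfl
    · rcases hq with rfl | rfl
      · exact hne (Sym2.eq_swap)
      · exact hpq rfl
  · rw [deltaX, if_neg hc]
    refine le_trans (min_le_right _ _) (csInf_le ?_ ?_)
    · refine ⟨0, fun r hr => ?_⟩
      obtain ⟨_, _, _, _, _, _, _, rfl⟩ := hr
      exact abs_nonneg _
    · refine ⟨x, y, p, q, hxy, hpq, ?_, rfl⟩
      by_contra h'
      push_neg at h'
      have h2' : ({x, y, p, q} : Set X).ncard ≤ 2 := by omega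
      have hsub1 : ({x, y} : Set X) ⊆ {x, y, p, q} := by
        intro a ha; simp only [Set.mem_insert_iff, Set.mem_singleton_iff] at ha ⊢; tauto
      have hsub2 : ({p, q} : Set X) ⊆ {x, y, p, q} := by
        intro a ha; simp only [Set.mem_insert_iff, Set.mem_singleton_iff] at ha ⊢; tauto
      have hfin : ({x, y, p, q} : Set X).Finite := Set.toFinite _
      have e1 : ({x, y} : Set X) = {x, y, p, q} := by
        apply Set.eq_of_subset_of_ncard_le hsub1 _ hfin
        rw [Set.ncard_pair hxy]; omega
      have e2 : ({p, q} : Set X) = {x, y, p, q} := by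
        apply Set.eq_of_subset_of_ncard_le hsub2 _ hfin
        rw [Set.ncard_pair hpq]; omega
      have e3 : ({x, y} : Set X) = {p, q} := e1.trans e2.symm
      rcases Set.pair_eq_pair_iff.1 e3 with ⟨rfl, rfl⟩ | ⟨rfl, rfl⟩
      · exact hne rfl
      · exact hne Sym2.eq_swap

lemma deltaX_le_dist (hn : 2 ≤ Fintype.card X) {x y : X} (hxy : x ≠ y) :
    deltaX X ≤ dist x y := by
  by_cases hc : Fintype.card X ≤ 2
  · rw [deltaX, if_pos hc]
    have h2 : Fintype.card X = 2 := le_antisymm hc hn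
    have huniv := univ_eq_pair h2 hxy
    refine Metric.diam_le_of_forall_dist_le dist_nonneg ?_
    intro a _ b _
    have ha : a = x ∨ a = y := by
      have : a ∈ ({x, y} : Finset X) := huniv ▸ Finset.mem_univ a
      simpa using this
    have hb : b = x ∨ b = y := by
      have : b ∈ ({x, y} : Finset X) := huniv ▸ Finset.mem_univ b
      simpa using this
    rcases ha with rfl | rfl <;> rcases hb with rfl | rfl <;>
      simp [dist_comm, dist_nonneg]
  · rw [deltaX, if_neg hc]
    push_neg at hc
    have hz : ∃ z : X, z ≠ x ∧ z ≠ y := by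
      by_contra h'
      push_neg at h'
      have hsub : (Finset.univ : Finset X) ⊆ {x, y} := by
        intro z _
        rcases Classical.em (z = x) with rfl | hzx
        · exact Finset.mem_insert_self _ _
        · have := h' z hzx; subst this
          exact Finset.mem_insert_of_mem (Finset.mem_singleton_self _)
      have := Finset.card_le_card hsub
      rw [Finset.card_univ] at this
      have h2 := Finset.card_insert_le x ({y} : Finset X)
      rw [Finset.card_singleton] at h2
      omega
    obtain ⟨z, hzx, hzy⟩ := hz
    set T := {r : ℝ | ∃ x y z : X, x ≠ y ∧ y ≠ z ∧ x ≠ z ∧ r = dist x y + dist y z - dist x z}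
      with hT
    have hbdd : BddBelow T := by
      refine ⟨0, fun r hr => ?_⟩
      obtain ⟨a, b, c, _, _, _, rfl⟩ := hr
      have := dist_triangle a b c
      linarith
    have h1 : sInf T ≤ dist x y + dist y z - dist x z :=
      csInf_le hbdd ⟨x, y, z, hxy, Ne.symm hzy, Ne.symm hzx, rfl⟩
    have h2 : sInf T ≤ dist z x + dist x y - dist z y :=
      csInf_le hbdd ⟨z, x, y, hzx, hxy, hzy, rfl⟩
    have hmin : min (sInf T)
        (sInf {r : ℝ | ∃ x y p q : X, x ≠ y ∧ p ≠ q ∧ 3 ≤ ({x, y, p, q} : Set X).ncard ∧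
          r = |dist x y - dist p q|}) ≤ sInf T := min_le_left _ _
    have hd1 : dist y z = dist z y := dist_comm _ _
    have hd2 : dist x z = dist z x := dist_comm _ _
    linarith

/-! ### Couplings from small Gromov-Hausdorff distance -/

open GromovHausdorff Metric Set in
lemma exists_coupling_equiv (X Y : Type) [MetricSpace X] [Fintype X] [Nonempty X]
    [MetricSpace Y] [Fintype Y] [Nonempty Y]
    (hc : Fintype.card Y ≤ Fintype.card X) (ε : ℝ)
    (hg : GromovHausdorff.ghDist X Y < ε)
    (hm : ∀ a b : X, a ≠ b → 2 * ε ≤ dist a b) :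
    ∃ f : X ≃ Y, ∀ a b : X,
      |dist (f a) (f b) - dist a b| ≤ 2 * GromovHausdorff.ghDist X Y := by
  set h := GromovHausdorff.ghDist X Y with hh
  set il := optimalGHInjl X Y
  set ir := optimalGHInjr X Y
  have hil : Isometry il := isometry_optimalGHInjl X Y
  have hir : Isometry ir := isometry_optimalGHInjr X Y
  have hcl : IsCompact (range il) := isCompact_range hil.continuous
  have hcr : IsCompact (range ir) := isCompact_range hir.continuous
  have hnel : (range il).Nonempty := range_nonempty _
  have hner : (range ir).Nonempty := range_nonempty _
  have hedist : EMetric.hausdorffEdist (range il) (range ir) ≠ ⊤ :=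
    hausdorffEdist_ne_top_of_nonempty_of_bounded hnel hner hcl.isBounded hcr.isBounded
  have hopt : hausdorffDist (range il) (range ir) = h := hausdorffDist_optimal
  have htot : ∀ x : X, ∃ y : Y, dist (il x) (ir y) ≤ h := by
    intro x
    obtain ⟨z, hz, hzd⟩ := hcr.exists_infDist_eq_dist hner (il x)
    obtain ⟨y, rfl⟩ := hz
    refine ⟨y, ?_⟩
    rw [← hzd, ← hopt]
    exact infDist_le_hausdorffDist_of_mem (mem_range_self x) hedist
  set ψ : X → Y := fun x => (htot x).choose with hψ
  have hψd : ∀ x, dist (il x) (ir (ψ x)) ≤ h := fun x => (htot x).choose_spec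
  have hinj : Function.Injective ψ := by
    intro a b hab
    by_contra hne
    have h1 : dist a b = dist (il a) (il b) := (hil.dist_eq a b).symm
    have h2 : dist (il a) (il b) ≤ dist (il a) (ir (ψ a)) + dist (ir (ψ a)) (il b) :=
      dist_triangle _ _ _
    have h3 : dist (ir (ψ a)) (il b) = dist (il b) (ir (ψ b)) := by
      rw [hab, dist_comm]
    have h4 := hψd a
    have h5 := hψd b
    have h6 := hm a b hne
    linarith
  have hbij : Function.Bijective ψ := by
    have hcard : Fintype.card X = Fintype.card Y :=
      le_antisymm (Fintype.card_le_of_injective ψ hinj) hc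
    exact (Fintype.bijective_iff_injective_and_card ψ).2 ⟨hinj, hcard⟩
  refine ⟨Equiv.ofBijective ψ hbij, ?_⟩
  intro a b
  have e1 : dist (ψ a) (ψ b) = dist (ir (ψ a)) (ir (ψ b)) := (hir.dist_eq _ _).symm
  have e2 : dist a b = dist (il a) (il b) := (hil.dist_eq _ _).symm
  have t1 : dist (ir (ψ a)) (ir (ψ b)) ≤
      dist (ir (ψ a)) (il a) + dist (il a) (il b) + dist (il b) (ir (ψ b)) :=
    dist_triangle4 _ _ _ _
  have t2 : dist (il a) (il b) ≤
      dist (il a) (ir (ψ a)) + dist (ir (ψ a)) (ir (ψ b)) + dist (ir (ψ b)) (il b) :=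
    dist_triangle4 _ _ _ _
  have h4 := hψd a
  have h5 := hψd b
  have c1 : dist (ir (ψ a)) (il a) = dist (il a) (ir (ψ a)) := dist_comm _ _
  have c2 : dist (ir (ψ b)) (il b) = dist (il b) (ir (ψ b)) := dist_comm _ _
  have : |dist (ψ a) (ψ b) - dist a b| ≤ 2 * h := by
    rw [abs_sub_le_iff]
    constructor <;> rw [e1, e2] <;> linarith
  exact this

/-- Upper bound for the GH distance from an almost-isometric bijection. -/
lemma ghDist_le_of_equiv (Y Y' : Type) [MetricSpace Y] [Fintype Y] [Nonempty Y]
    [MetricSpace Y'] [Fintype Y'] [Nonempty Y'] (u : Y ≃ Y') {s : ℝ}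
    (h : ∀ a b : Y, |dist (u a) (u b) - dist a b| ≤ 2 * s) :
    GromovHausdorff.ghDist Y Y' ≤ s := by
  have H := GromovHausdorff.ghDist_le_of_approx_subsets (X := Y) (Y := Y')
      (s := (Set.univ : Set Y)) (fun y => u y.1) (ε₁ := 0) (ε₂ := 2 * s) (ε₃ := 0)
      ?_ ?_ ?_
  · linarith
  · intro x
    exact ⟨x, Set.mem_univ x, by simp⟩
  · intro x
    refine ⟨⟨u.symm x, Set.mem_univ _⟩, ?_⟩
    simp
  · intro p q
    rw [Subtype.dist_eq p q, abs_sub_comm]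
    exact h p.1 q.1

/-! ### Order preservation of distances under couplings -/

lemma coupling_lt {Y : Type} [MetricSpace Y] [Fintype Y] (hn : 2 ≤ Fintype.card X)
    (f : X ≃ Y)
    (hb : ∀ a b : X, |dist (f a) (f b) - dist a b| < deltaX X / 3)
    {x y z w : X} (hxy : x ≠ y) (hzw : z ≠ w) (hlt : dist x y < dist z w) :
    dist (f x) (f y) < dist (f z) (f w) := by
  have hne : s(x, y) ≠ s(z, w) := by
    intro h
    rcases Sym2.eq_iff.1 h with ⟨rfl, rfl⟩ | ⟨rfl, rfl⟩
    · exact lt_irrefl _ hlt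
    · rw [dist_comm] at hlt; exact lt_irrefl _ hlt
  have hsep := deltaX_le_abs_sub hn hxy hzw hne
  have habs : |dist x y - dist z w| = dist z w - dist x y := by
    rw [abs_sub_comm]; exact abs_of_pos (by linarith)
  rw [habs] at hsep
  have h1 := hb x y
  have h2 := hb z w
  rw [abs_sub_lt_iff] at h1 h2
  linarith [h1.1, h1.2, h2.1, h2.2]

lemma pairs_hd_inj {Y : Type} [MetricSpace Y] [Fintype Y]
    (hn : 2 ≤ Fintype.card X) (hδ : 0 < deltaX X) (f : X ≃ Y)
    (hb : ∀ a b : X, |dist (f a) (f b) - dist a b| < deltaX X / 3) :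
    ∀ P ∈ pairs Y, ∀ Q ∈ pairs Y, hd Y P = hd Y Q → P = Q := by
  intro P hP Q hQ hPQ
  revert hP hQ hPQ
  induction P using Sym2.ind with
  | _ x y =>
    induction Q using Sym2.ind with
    | _ z w =>
      intro hP hQ hPQ
      rw [mk_mem_pairs] at hP hQ
      rw [hd_mk, hd_mk] at hPQ
      have hd_eq : dist x y = dist z w := by linarith
      by_contra hne
      set x0 := f.symm x with hx0
      set y0 := f.symm y with hy0
      set z0 := f.symm z with hz0
      set w0 := f.symm w with hw0
      have hfx : f x0 = x := f.apply_symm_apply x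
      have hfy : f y0 = y := f.apply_symm_apply y
      have hfz : f z0 = z := f.apply_symm_apply z
      have hfw : f w0 = w := f.apply_symm_apply w
      have hx0y0 : x0 ≠ y0 := fun h => hP (by rw [← hfx, ← hfy, h])
      have hz0w0 : z0 ≠ w0 := fun h => hQ (by rw [← hfz, ← hfw, h])
      have hne0 : s(x0, y0) ≠ s(z0, w0) := by
        intro h
        apply hne
        rcases Sym2.eq_iff.1 h with ⟨h1, h2⟩ | ⟨h1, h2⟩
        · rw [Sym2.eq_iff]
          left
          constructor
          · rw [← hfx, h1, hfz]
          · rw [← hfy, h2, hfw]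
        · rw [Sym2.eq_iff]
          right
          constructor
          · rw [← hfx, h1, hfw]
          · rw [← hfy, h2, hfz]
      have hsep := deltaX_le_abs_sub hn hx0y0 hz0w0 hne0
      have hb1 := hb x0 y0
      have hb2 := hb z0 w0
      rw [hfx, hfy] at hb1
      rw [hfz, hfw] at hb2
      rw [abs_sub_lt_iff] at hb1 hb2
      have habs : |dist x0 y0 - dist z0 w0| ≤
          |dist x0 y0 - dist x y| + |dist x y - dist z0 w0| := abs_sub_le _ _ _
      have habs2 : |dist x y - dist z0 w0| = |dist z w - dist z0 w0| := by rw [hd_eq]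
      rw [habs2] at habs
      have k1 : |dist x0 y0 - dist x y| < deltaX X / 3 := by
        rw [abs_sub_comm, abs_sub_lt_iff]
        exact ⟨hb1.1, hb1.2⟩
      have k2 : |dist z w - dist z0 w0| < deltaX X / 3 := by
        rw [abs_sub_lt_iff]
        exact ⟨hb2.1, hb2.2⟩
      have := deltaX_le_abs_sub hn hx0y0 hz0w0 hne0
      linarith [this, habs, k1, k2]

lemma coupling_lt_sym2 {Y : Type} [MetricSpace Y] [Fintype Y]
    (hn : 2 ≤ Fintype.card X) (f : X ≃ Y)
    (hb : ∀ a b : X, |dist (f a) (f b) - dist a b| < deltaX X / 3)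
    {P Q : Sym2 X} (hP : P ∈ pairs X) (hQ : Q ∈ pairs X) (hlt : hd X P < hd X Q) :
    hd Y (Sym2.map f P) < hd Y (Sym2.map f Q) := by
  revert hP hQ hlt
  induction P using Sym2.ind with
  | _ x y =>
    induction Q using Sym2.ind with
    | _ z w =>
      intro hP hQ hlt
      rw [mk_mem_pairs] at hP hQ
      rw [hd_mk, hd_mk] at hlt
      rw [Sym2.map_pair_eq, Sym2.map_pair_eq, hd_mk, hd_mk]
      have := coupling_lt hn f hb hP hQ (by linarith)
      linarith

end LocGH

/-- Local isometry of Gromov–Hausdorff space near a generic space: if `X` is generic with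
`n ≥ 2` points, `δ = δ(X)/6`, and `Y`, `Y'` are metric spaces with at most `n` points
lying at Gromov–Hausdorff distance `< δ` from `X`, then both `Y` and `Y'` have exactly
`n` points and `d_GH(Y,Y') = ‖ν(Y) − ν(Y')‖_∞`. -/
theorem ghDist_eq_supDist_near_generic
    (X Y Y' : Type) [MetricSpace X] [Fintype X] [Nonempty X]
    [MetricSpace Y] [Fintype Y] [Nonempty Y]
    [MetricSpace Y'] [Fintype Y'] [Nonempty Y']
    (hn : 2 ≤ Fintype.card X) (hX : IsGenericSpace X)
    (hY : Fintype.card Y ≤ Fintype.card X) (hY' : Fintype.card Y' ≤ Fintype.card X)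
    (h1 : GromovHausdorff.ghDist X Y < deltaX X / 6)
    (h2 : GromovHausdorff.ghDist X Y' < deltaX X / 6) :
    Fintype.card Y = Fintype.card X ∧ Fintype.card Y' = Fintype.card X ∧
    GromovHausdorff.ghDist Y Y' = supDist (nuList Y) (nuList Y') := by
  classical
  have hgXYnn : 0 ≤ GromovHausdorff.ghDist X Y := by
    rw [GromovHausdorff.ghDist]; exact dist_nonneg
  have hgXY'nn : 0 ≤ GromovHausdorff.ghDist X Y' := by
    rw [GromovHausdorff.ghDist]; exact dist_nonneg
  have hδpos : 0 < deltaX X := by linarith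
  have hminX : ∀ a b : X, a ≠ b → 2 * (deltaX X / 6) ≤ dist a b := by
    intro a b hab
    have := LocGH.deltaX_le_dist hn hab
    linarith
  obtain ⟨f, hf⟩ := LocGH.exists_coupling_equiv X Y hY (deltaX X / 6) h1 hminX
  obtain ⟨f', hf'⟩ := LocGH.exists_coupling_equiv X Y' hY' (deltaX X / 6) h2 hminX
  have hcY : Fintype.card Y = Fintype.card X := (Fintype.card_congr f).symm
  have hcY' : Fintype.card Y' = Fintype.card X := (Fintype.card_congr f').symm
  refine ⟨hcY, hcY', ?_⟩
  have hbY : ∀ a b : X, |dist (f a) (f b) - dist a b| < deltaX X / 3 :=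
    fun a b => lt_of_le_of_lt (hf a b) (by linarith)
  have hbY' : ∀ a b : X, |dist (f' a) (f' b) - dist a b| < deltaX X / 3 :=
    fun a b => lt_of_le_of_lt (hf' a b) (by linarith)
  have hinjX : ∀ P ∈ LocGH.pairs X, ∀ Q ∈ LocGH.pairs X,
      LocGH.hd X P = LocGH.hd X Q → P = Q :=
    LocGH.pairs_hd_inj hn hδpos (Equiv.refl X) (fun a b => by
      simp only [Equiv.refl_apply, sub_self, abs_zero]
      linarith)
  have hinjY : ∀ P ∈ LocGH.pairs Y, ∀ Q ∈ LocGH.pairs Y,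
      LocGH.hd Y P = LocGH.hd Y Q → P = Q :=
    LocGH.pairs_hd_inj hn hδpos f hbY
  have hinjY' : ∀ P ∈ LocGH.pairs Y', ∀ Q ∈ LocGH.pairs Y',
      LocGH.hd Y' P = LocGH.hd Y' Q → P = Q :=
    LocGH.pairs_hd_inj hn hδpos f' hbY'
  -- minimal distance in Y
  have hminY : ∀ u v : Y, u ≠ v → 2 * (deltaX X / 3) ≤ dist u v := by
    intro u v huv
    have hne : f.symm u ≠ f.symm v := fun h => huv (by
      rw [← f.apply_symm_apply u, h, f.apply_symm_apply])
    have hb := hbY (f.symm u) (f.symm v)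
    rw [f.apply_symm_apply, f.apply_symm_apply] at hb
    have hdd := LocGH.deltaX_le_dist hn hne
    rw [abs_sub_lt_iff] at hb
    linarith [hb.1, hb.2]
  have hgYY'nn : 0 ≤ GromovHausdorff.ghDist Y Y' := by
    rw [GromovHausdorff.ghDist]; exact dist_nonneg
  have htri : GromovHausdorff.ghDist Y Y' ≤
      GromovHausdorff.ghDist X Y + GromovHausdorff.ghDist X Y' := by
    rw [GromovHausdorff.ghDist, GromovHausdorff.ghDist, GromovHausdorff.ghDist]
    calc dist (GromovHausdorff.toGHSpace Y) (GromovHausdorff.toGHSpace Y')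
        ≤ dist (GromovHausdorff.toGHSpace Y) (GromovHausdorff.toGHSpace X) +
          dist (GromovHausdorff.toGHSpace X) (GromovHausdorff.toGHSpace Y') :=
          dist_triangle _ _ _
      _ = _ := by rw [dist_comm (GromovHausdorff.toGHSpace Y)]
  have hYY' : GromovHausdorff.ghDist Y Y' < deltaX X / 3 := by linarith
  obtain ⟨gt, hgt⟩ := LocGH.exists_coupling_equiv Y Y'
    (le_of_eq (hcY'.trans hcY.symm)) (deltaX X / 3) hYY' hminY
  have hlow : supDist (nuList Y) (nuList Y') ≤ GromovHausdorff.ghDist Y Y' :=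
    LocGH.supDist_nuList_le gt hgYY'nn hinjY hinjY' hgt
  -- upper bound with the order-matching bijection
  set g : Y ≃ Y' := f.symm.trans f' with hg
  have hgmap : ∀ P : Sym2 Y, Sym2.map g P = Sym2.map f' (Sym2.map f.symm P) := by
    intro P
    rw [hg, Equiv.coe_trans]
    exact (Sym2.map_map P).symm
  have horder : ∀ P ∈ LocGH.pairs Y, ∀ Q ∈ LocGH.pairs Y,
      (LocGH.hd Y P ≤ LocGH.hd Y Q ↔
        LocGH.hd Y' (Sym2.map g P) ≤ LocGH.hd Y' (Sym2.map g Q)) := by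
    intro P hP Q hQ
    by_cases hPQ : P = Q
    · subst hPQ; simp
    have hP0 : Sym2.map f.symm P ∈ LocGH.pairs X := LocGH.map_mem_pairs f.symm hP
    have hQ0 : Sym2.map f.symm Q ∈ LocGH.pairs X := LocGH.map_mem_pairs f.symm hQ
    have hfP : Sym2.map f (Sym2.map f.symm P) = P := LocGH.map_map_symm f P
    have hfQ : Sym2.map f (Sym2.map f.symm Q) = Q := LocGH.map_map_symm f Q
    have hne0 : Sym2.map f.symm P ≠ Sym2.map f.symm Q := fun h => hPQ (by
      rw [← hfP, h, hfQ])
    rcases lt_trichotomy (LocGH.hd X (Sym2.map f.symm P)) (LocGH.hd X (Sym2.map f.symm Q))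
      with hlt | heq0 | hgt0
    · have l1 : LocGH.hd Y P < LocGH.hd Y Q := by
        have := LocGH.coupling_lt_sym2 hn f hbY hP0 hQ0 hlt
        rwa [hfP, hfQ] at this
      have l2 : LocGH.hd Y' (Sym2.map g P) < LocGH.hd Y' (Sym2.map g Q) := by
        rw [hgmap P, hgmap Q]
        exact LocGH.coupling_lt_sym2 hn f' hbY' hP0 hQ0 hlt
      exact iff_of_true l1.le l2.le
    · exact absurd (hinjX _ hP0 _ hQ0 heq0) hne0
    · have l1 : LocGH.hd Y Q < LocGH.hd Y P := by
        have := LocGH.coupling_lt_sym2 hn f hbY hQ0 hP0 hgt0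
        rwa [hfP, hfQ] at this
      have l2 : LocGH.hd Y' (Sym2.map g Q) < LocGH.hd Y' (Sym2.map g P) := by
        rw [hgmap P, hgmap Q]
        exact LocGH.coupling_lt_sym2 hn f' hbY' hQ0 hP0 hgt0
      exact iff_of_false (not_le.2 l1) (not_le.2 l2)
  have hup : GromovHausdorff.ghDist Y Y' ≤ supDist (nuList Y) (nuList Y') :=
    LocGH.ghDist_le_of_equiv Y Y' g (LocGH.abs_sub_le_two_supDist g hinjY hinjY' horder)
  exact le_antisymm hup hlow
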